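/- Let C be a nontrivial completely regular code in H(n,q) with covering radius ρ ≥ 1 and intersection numbers γ_i, β_i, and let C' be a nontrivial completely regular code in H(n',q') with covering radius ρ' ≥ ρ and intersection numbers γ'_i, β'_i. Then C × C' is completely regular in H(n,q) × H(n',q') if and only if there exist integers n_1, n_2 such that γ_i = n_1·i for 0 ≤ i ≤ ρ, γ'_i = n_1·i for 0 ≤ i ≤ ρ', β_{ρ-i} = n_2·i for 0 ≤ i ≤ ρ, and β'_{ρ'-i} = n_2·i for 0 ≤ i ≤ ρ'. In this case C × C' has covering radius ρ + ρ' with intersection numbers γ̄_i = n_1·i and β̄_i = n_2(ρ+ρ'−i). -/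

import Mathlib

open SimpleGraph

/-- The Hamming graph on `Fin n → Q`: words adjacent iff they differ in one coordinate. -/
def hammingGraph (n : ℕ) (Q : Type*) [DecidableEq Q] : SimpleGraph (Fin n → Q) where
  Adj x y := hammingDist x y = 1
  symm := ⟨fun x y h => by show hammingDist y x = 1; rw [hammingDist_comm]; exact h⟩
  loopless := ⟨fun x h => by have h : hammingDist x x = 1 := h; rw [hammingDist_self] at h; exact absurd h.symm one_ne_zero⟩

/-- Distance from a vertex to a code, via graph distance. -/
noncomputable def distToCode {V : Type*} (G : SimpleGraph V) (C : Set V) (x : V) : ℕ :=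
  sInf {d | ∃ c ∈ C, G.dist x c = d}

/-- The `i`-th cell of the distance partition of a code. -/
noncomputable def codeCell {V : Type*} (G : SimpleGraph V) (C : Set V) (i : ℕ) : Set V :=
  {x | distToCode G C x = i}

/-- The number of neighbors of `x` lying in `S`. -/
noncomputable def nbrCount {V : Type*} (G : SimpleGraph V) (x : V) (S : Set V) : ℕ :=
  (G.neighborSet x ∩ S).ncard

/-- Covering radius of a code. -/
noncomputable def covRad {V : Type*} (G : SimpleGraph V) (C : Set V) : ℕ :=
  sSup {d | ∃ x, distToCode G C x = d}

/-- A code is completely regular if its distance partition is equitable. -/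
def IsCompRegCode {V : Type*} (G : SimpleGraph V) (C : Set V) : Prop :=
  ∀ i j : ℕ, ∀ x ∈ codeCell G C i, ∀ y ∈ codeCell G C i,
    nbrCount G x (codeCell G C j) = nbrCount G y (codeCell G C j)

/-- Intersection numbers `γ, α, β` of a code with covering radius `ρ`. -/
def HasIntNums {V : Type*} (G : SimpleGraph V) (C : Set V) (ρ : ℕ) (γ α β : ℕ → ℕ) : Prop :=
  γ 0 = 0 ∧ β ρ = 0 ∧
  ∀ i ≤ ρ, ∀ x ∈ codeCell G C i,
    (1 ≤ i → nbrCount G x (codeCell G C (i-1)) = γ i) ∧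
    nbrCount G x (codeCell G C i) = α i ∧
    (i < ρ → nbrCount G x (codeCell G C (i+1)) = β i)

/-- Equitable partition of the vertex set of a graph. -/
def IsEquitable {V : Type*} (G : SimpleGraph V) (Pa : Set (Set V)) : Prop :=
  ∀ P ∈ Pa, ∀ P' ∈ Pa, ∀ x ∈ P, ∀ y ∈ P, nbrCount G x P' = nbrCount G y P'

/-- Quotient graph of a graph by a partition of its vertex set. -/
def quotientGraph {V : Type*} (G : SimpleGraph V) (Pa : Set (Set V)) : SimpleGraph Pa where
  Adj P P' := P ≠ P' ∧ ∃ x ∈ (P : Set V), ∃ y ∈ (P' : Set V), G.Adj x y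
  symm := ⟨by
    rintro P P' ⟨hne, x, hx, y, hy, hxy⟩
    exact ⟨hne.symm, y, hy, x, hx, hxy.symm⟩⟩
  loopless := ⟨by rintro P ⟨hne, -⟩; exact hne rfl⟩

/-- Completely regular partition with common intersection numbers. -/
def IsCompRegPartition {V : Type*} (G : SimpleGraph V) (Pa : Set (Set V))
    (ρ : ℕ) (γ α β : ℕ → ℕ) : Prop :=
  Setoid.IsPartition Pa ∧ IsEquitable G Pa ∧
    ∀ P ∈ Pa, IsCompRegCode G P ∧ covRad G P = ρ ∧ HasIntNums G P ρ γ α β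

/-- Distance-regular graph of diameter `D` with intersection arrays `b`, `c`. -/
def IsDistRegular {V : Type*} (G : SimpleGraph V) (D : ℕ) (b c : ℕ → ℕ) : Prop :=
  G.Connected ∧ (∀ x y : V, G.dist x y ≤ D) ∧ (∃ x y : V, G.dist x y = D) ∧
  ∀ i ≤ D, ∀ x y : V, G.dist x y = i →
    (1 ≤ i → nbrCount G y {z | G.dist x z = i - 1} = c i) ∧
    (i < D → nbrCount G y {z | G.dist x z = i + 1} = b i)

/-- The tridiagonal quotient matrix of a completely regular code. -/
noncomputable def quotMatrix (ρ : ℕ) (γ α β : ℕ → ℕ) : Matrix (Fin (ρ+1)) (Fin (ρ+1)) ℝ :=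
  Matrix.of fun i j =>
    if (j : ℕ) + 1 = (i : ℕ) then (γ (i : ℕ) : ℝ)
    else if (i : ℕ) = (j : ℕ) then (α (i : ℕ) : ℝ)
    else if (i : ℕ) + 1 = (j : ℕ) then (β (i : ℕ) : ℝ)
    else 0


section General
variable {V : Type*} {G : SimpleGraph V} {C : Set V}

lemma distSet_nonempty (hC : C.Nonempty) (x : V) :
    {d | ∃ c ∈ C, G.dist x c = d}.Nonempty := by
  obtain ⟨c, hc⟩ := hC
  exact ⟨G.dist x c, c, hc, rfl⟩

lemma exists_nearest (hC : C.Nonempty) (x : V) :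
    ∃ c ∈ C, G.dist x c = distToCode G C x :=
  Nat.sInf_mem (distSet_nonempty hC x)

lemma distToCode_le_dist {c : V} (hc : c ∈ C) (x : V) :
    distToCode G C x ≤ G.dist x c :=
  Nat.sInf_le ⟨c, hc, rfl⟩

lemma distToCode_le_succ_of_adj (hconn : G.Connected) (hC : C.Nonempty)
    {x y : V} (hxy : G.Adj x y) :
    distToCode G C x ≤ distToCode G C y + 1 := by
  obtain ⟨c, hc, hdc⟩ := exists_nearest hC y
  calc distToCode G C x ≤ G.dist x c := distToCode_le_dist hc x
    _ ≤ G.dist x y + G.dist y c := hconn.dist_triangle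
    _ = distToCode G C y + 1 := by rw [dist_eq_one_iff_adj.2 hxy, hdc]; omega

lemma exists_adj_distToCode_pred (hconn : G.Connected) (hC : C.Nonempty)
    {x : V} {d : ℕ} (hx : distToCode G C x = d + 1) :
    ∃ y, G.Adj x y ∧ distToCode G C y = d := by
  obtain ⟨c, hc, hdc⟩ := exists_nearest hC x
  rw [hx] at hdc
  obtain ⟨w, hw⟩ := (hconn.preconnected x c).exists_walk_length_eq_dist
  rw [hdc] at hw
  cases w with
  | nil => simp at hw
  | @cons _ y _ h w' =>
    refine ⟨y, h, le_antisymm ?_ ?_⟩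
    · have : G.dist y c ≤ d := by
        have := dist_le w'
        simp at hw; omega
      exact le_trans (distToCode_le_dist hc y) this
    · have h1 := distToCode_le_succ_of_adj hconn hC h
      omega

lemma distToCode_le_covRad [Finite V] (x : V) :
    distToCode G C x ≤ covRad G C := by
  have hbdd : BddAbove {d | ∃ x, distToCode G C x = d} := by
    have : {d | ∃ x, distToCode G C x = d} = Set.range (distToCode G C) := by
      ext d; simp [eq_comm]
    rw [this]
    exact (Set.finite_range _).bddAbove
  exact le_csSup hbdd ⟨x, rfl⟩

lemma covRad_spec [Finite V] [Nonempty V] :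
    ∃ x, distToCode G C x = covRad G C := by
  have hbdd : BddAbove {d | ∃ x, distToCode G C x = d} := by
    have : {d | ∃ x, distToCode G C x = d} = Set.range (distToCode G C) := by
      ext d; simp [eq_comm]
    rw [this]; exact (Set.finite_range _).bddAbove
  have hne : {d | ∃ x, distToCode G C x = d}.Nonempty := ⟨_, Classical.arbitrary V, rfl⟩
  exact Nat.sSup_mem hne hbdd

lemma covRad_eq_of [Finite V] {r : ℕ} (hub : ∀ x, distToCode G C x ≤ r)
    (hx : ∃ x, distToCode G C x = r) : covRad G C = r := by
  obtain ⟨x, hx⟩ := hx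
  have h1 : r ≤ covRad G C := hx ▸ distToCode_le_covRad x
  have h2 : covRad G C ≤ r := by
    have : Nonempty V := ⟨x⟩
    obtain ⟨y, hy⟩ := covRad_spec (G := G) (C := C)
    exact hy ▸ hub y
  omega

lemma exists_distToCode_eq (hconn : G.Connected) (hC : C.Nonempty)
    {d : ℕ} {x : V} (hx : distToCode G C x = d) {i : ℕ} (hi : i ≤ d) :
    ∃ y, distToCode G C y = i := by
  induction d generalizing x with
  | zero => exact ⟨x, by omega⟩
  | succ e ih =>
    rcases Nat.eq_or_lt_of_le hi with h | h
    · exact ⟨x, by omega⟩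
    · obtain ⟨y, -, hy⟩ := exists_adj_distToCode_pred hconn hC hx
      exact ih hy (by omega)

lemma cell_nonempty [Finite V] (hconn : G.Connected) (hC : C.Nonempty)
    {i : ℕ} (hi : i ≤ covRad G C) : (codeCell G C i).Nonempty := by
  have : Nonempty V := hconn.nonempty
  obtain ⟨x, hx⟩ := covRad_spec (G := G) (C := C)
  exact exists_distToCode_eq hconn hC hx hi

lemma dtc_nbr_bounds (hconn : G.Connected) (hC : C.Nonempty) {x z : V} (hz : z ∈ G.neighborSet x) :
    distToCode G C z ≤ distToCode G C x + 1 ∧ distToCode G C x ≤ distToCode G C z + 1 :=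
  ⟨distToCode_le_succ_of_adj hconn hC hz.symm, distToCode_le_succ_of_adj hconn hC hz⟩

lemma nbrCount_cell_eq_zero (hconn : G.Connected) (hC : C.Nonempty) {x : V} {i m : ℕ}
    (hx : x ∈ codeCell G C i) (h1 : m + 1 ≠ i) (h2 : m ≠ i) (h3 : m ≠ i + 1) :
    nbrCount G x (codeCell G C m) = 0 := by
  have : G.neighborSet x ∩ codeCell G C m = ∅ := by
    ext z
    simp only [Set.mem_inter_iff, Set.mem_empty_iff_false, iff_false, not_and]
    intro hz hzm
    have hb := dtc_nbr_bounds hconn hC (x := x) (z := z) hz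
    simp only [codeCell, Set.mem_setOf_eq] at hx hzm
    omega
  simp [nbrCount, this]

lemma neighborSet_ncard_split [Finite V] (hconn : G.Connected) (hC : C.Nonempty)
    {x : V} {i : ℕ} (hx : x ∈ codeCell G C i) :
    (G.neighborSet x).ncard =
      nbrCount G x {z | distToCode G C z + 1 = i} + nbrCount G x (codeCell G C i)
        + nbrCount G x (codeCell G C (i+1)) := by
  simp only [codeCell, Set.mem_setOf_eq] at hx
  have hunion : G.neighborSet x =
      (G.neighborSet x ∩ {z | distToCode G C z + 1 = i})
        ∪ (G.neighborSet x ∩ codeCell G C i) ∪ (G.neighborSet x ∩ codeCell G C (i+1)) := by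
    ext z
    simp only [Set.mem_union, Set.mem_inter_iff, Set.mem_setOf_eq, codeCell]
    constructor
    · intro hz
      have hb := dtc_nbr_bounds hconn hC (x := x) (z := z) hz
      have : distToCode G C z + 1 = i ∨ distToCode G C z = i ∨ distToCode G C z = i + 1 := by omega
      tauto
    · tauto
  have d1 : Disjoint (G.neighborSet x ∩ {z | distToCode G C z + 1 = i})
      (G.neighborSet x ∩ codeCell G C i) := by
    rw [Set.disjoint_left]
    rintro z ⟨-, hz1⟩ ⟨-, hz2⟩
    simp only [Set.mem_setOf_eq, codeCell] at hz1 hz2; omega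
  have d2 : Disjoint ((G.neighborSet x ∩ {z | distToCode G C z + 1 = i})
      ∪ (G.neighborSet x ∩ codeCell G C i)) (G.neighborSet x ∩ codeCell G C (i+1)) := by
    rw [Set.disjoint_left]
    rintro z (⟨-, hz1⟩ | ⟨-, hz1⟩) ⟨-, hz2⟩ <;>
      simp only [Set.mem_setOf_eq, codeCell] at hz1 hz2 <;> omega
  rw [nbrCount, nbrCount, nbrCount, ← Set.ncard_union_eq d1 (Set.toFinite _) (Set.toFinite _),
    ← Set.ncard_union_eq d2 (Set.toFinite _) (Set.toFinite _), ← hunion]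

end General

lemma hammingGraph_connected (n q : ℕ) [Nonempty (Fin n → Fin q)] :
    (hammingGraph n (Fin q)).Connected := by
  rw [connected_iff]
  refine ⟨fun x y => ?_, inferInstance⟩
  obtain ⟨d, hd⟩ : ∃ d, hammingDist x y = d := ⟨_, rfl⟩
  induction d generalizing x with
  | zero => rw [eq_of_hammingDist_eq_zero hd]
  | succ e ih =>
    have hne : ∃ i, x i ≠ y i := by
      by_contra h
      push_neg at h
      have : x = y := funext h
      rw [this, hammingDist_self] at hd; omega
    obtain ⟨i, hi⟩ := hne
    set x' := Function.update x i (y i) with hx'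
    have hadj : (hammingGraph n (Fin q)).Adj x x' := by
      show hammingDist x x' = 1
      rw [hammingDist, Finset.card_eq_one]
      refine ⟨i, ?_⟩
      ext j
      simp only [Finset.mem_filter, Finset.mem_univ, true_and, Finset.mem_singleton, hx']
      constructor
      · intro hj
        by_contra hji
        rw [Function.update_of_ne hji] at hj; exact hj rfl
      · rintro rfl; rw [Function.update_self]; exact hi
    have hd' : hammingDist x' y = e := by
      have : (Finset.univ.filter fun j => x' j ≠ y j)
          = (Finset.univ.filter fun j => x j ≠ y j).erase i := by
        ext j
        simp only [Finset.mem_filter, Finset.mem_univ, true_and, Finset.mem_erase, hx']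
        rcases eq_or_ne j i with rfl | hji
        · simp [Function.update_self]
        · rw [Function.update_of_ne hji]; tauto
      rw [hammingDist] at hd ⊢
      rw [this, Finset.card_erase_of_mem (by simp [hi]), hd]
      omega
    exact (hadj.reachable).trans (ih x' hd')

lemma hammingGraph_regular (n q : ℕ) (hq : q ≠ 0) (x y : Fin n → Fin q) :
    ((hammingGraph n (Fin q)).neighborSet x).ncard
      = ((hammingGraph n (Fin q)).neighborSet y).ncard := by
  have : NeZero q := ⟨hq⟩
  set c : Fin n → Fin q := fun i => y i - x i with hc
  have himg : (fun z : Fin n → Fin q => z + c) '' (hammingGraph n (Fin q)).neighborSet x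
      = (hammingGraph n (Fin q)).neighborSet y := by
    have hxy : x + c = y := by funext i; simp [hc]
    ext w
    simp only [Set.mem_image, mem_neighborSet]
    constructor
    · rintro ⟨z, hz, rfl⟩
      show hammingDist y (z + c) = 1
      rw [← hxy]
      have : hammingDist (x + c) (z + c) = hammingDist x z := by
        simp [hammingDist, Pi.add_apply]
      rw [this]; exact hz
    · intro hw
      refine ⟨w - c, ?_, by funext i; simp⟩
      show hammingDist x (w - c) = 1
      have : hammingDist x (w - c) = hammingDist (x + c) w := by
        simp only [hammingDist]
        congr 1
        ext j
        simp only [Finset.mem_filter, Pi.sub_apply, Pi.add_apply]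
        constructor <;> intro ⟨h1, h2⟩ <;> refine ⟨h1, fun h => h2 ?_⟩
        · exact eq_sub_of_add_eq h
        · exact sub_add_cancel (w j) (c j) ▸ by rw [h]
      rw [this, hxy]; exact hw
  calc ((hammingGraph n (Fin q)).neighborSet x).ncard
      = ((fun z : Fin n → Fin q => z + c) '' (hammingGraph n (Fin q)).neighborSet x).ncard := by
        rw [Set.ncard_image_of_injective _ (fun a b h => by
          funext i; have := congrFun h i; simpa using this)]
    _ = _ := by rw [himg]

section BoxAux
variable {α β : Type*} {G : SimpleGraph α} {H : SimpleGraph β}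

lemma boxProd_dist_le_walk (hG : G.Connected) (hH : H.Connected) :
    ∀ {x y : α × β} (w : (G □ H).Walk x y), G.dist x.1 y.1 + H.dist x.2 y.2 ≤ w.length := by
  intro x y w
  induction w with
  | nil => simp
  | @cons u v t h w ih =>
    rcases boxProd_adj.1 h with ⟨h1, h2⟩ | ⟨h1, h2⟩
    · have t1 : G.dist u.1 t.1 ≤ 1 + G.dist v.1 t.1 := by
        calc G.dist u.1 t.1 ≤ G.dist u.1 v.1 + G.dist v.1 t.1 := hG.dist_triangle
          _ ≤ 1 + G.dist v.1 t.1 := by rw [dist_eq_one_iff_adj.2 h1]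
      have t2 : H.dist u.2 t.2 = H.dist v.2 t.2 := by rw [h2]
      simp only [Walk.length_cons]
      omega
    · have t1 : H.dist u.2 t.2 ≤ 1 + H.dist v.2 t.2 := by
        calc H.dist u.2 t.2 ≤ H.dist u.2 v.2 + H.dist v.2 t.2 := hH.dist_triangle
          _ ≤ 1 + H.dist v.2 t.2 := by rw [dist_eq_one_iff_adj.2 h1]
      have t2 : G.dist u.1 t.1 = G.dist v.1 t.1 := by rw [h2]
      simp only [Walk.length_cons]
      omega

lemma boxProd_dist (hG : G.Connected) (hH : H.Connected) (x y : α × β) :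
    (G □ H).dist x y = G.dist x.1 y.1 + H.dist x.2 y.2 := by
  obtain ⟨x1, x2⟩ := x
  obtain ⟨y1, y2⟩ := y
  dsimp only
  refine le_antisymm ?_ ?_
  · obtain ⟨w1, hw1⟩ := (hG.preconnected x1 y1).exists_walk_length_eq_dist
    obtain ⟨w2, hw2⟩ := (hH.preconnected x2 y2).exists_walk_length_eq_dist
    have := dist_le ((w1.boxProdLeft H x2).append (w2.boxProdRight G y1))
    simp only [Walk.length_append] at this; rw [show (w1.boxProdLeft H x2).length = w1.length from Walk.length_map _ _, show (w2.boxProdRight G y1).length = w2.length from Walk.length_map _ _] at this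
    omega
  · obtain ⟨w, hw⟩ :=
      (((connected_boxProd).2 ⟨hG, hH⟩).preconnected (x1, x2) (y1, y2)).exists_walk_length_eq_dist
    exact hw ▸ boxProd_dist_le_walk hG hH w
lemma distToCode_boxProd (hG : G.Connected) (hH : H.Connected)
    {C : Set α} {C' : Set β} (hC : C.Nonempty) (hC' : C'.Nonempty) (x : α) (y : β) :
    distToCode (G □ H) (C ×ˢ C') (x, y) = distToCode G C x + distToCode H C' y := by
  refine le_antisymm ?_ ?_
  · obtain ⟨c, hc, hdc⟩ := Nat.sInf_mem (show {d | ∃ c ∈ C, G.dist x c = d}.Nonempty from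
      ⟨_, hC.choose, hC.choose_spec, rfl⟩)
    obtain ⟨c', hc', hdc'⟩ := Nat.sInf_mem (show {d | ∃ c ∈ C', H.dist y c = d}.Nonempty from
      ⟨_, hC'.choose, hC'.choose_spec, rfl⟩)
    refine Nat.sInf_le ⟨(c, c'), Set.mk_mem_prod hc hc', ?_⟩
    rw [boxProd_dist hG hH]
    exact congrArg₂ (· + ·) hdc hdc'
  · refine le_csInf ⟨_, (hC.choose, hC'.choose),
      Set.mk_mem_prod hC.choose_spec hC'.choose_spec, rfl⟩ ?_
    rintro d ⟨⟨c, c'⟩, ⟨hc, hc'⟩, rfl⟩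
    rw [boxProd_dist hG hH]
    exact Nat.add_le_add (Nat.sInf_le ⟨c, hc, rfl⟩) (Nat.sInf_le ⟨c', hc', rfl⟩)

lemma nbrCount_boxProd [Finite α] [Finite β] (x : α) (y : β) (S : Set (α × β)) :
    nbrCount (G □ H) (x, y) S
      = nbrCount G x {z | (z, y) ∈ S} + nbrCount H y {z | (x, z) ∈ S} := by
  have hsplit : (G □ H).neighborSet (x, y) ∩ S
      = ((fun z => (z, y)) '' (G.neighborSet x ∩ {z | (z, y) ∈ S}))
        ∪ ((fun z => (x, z)) '' (H.neighborSet y ∩ {z | (x, z) ∈ S})) := by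
    ext ⟨a, b⟩
    simp only [Set.mem_inter_iff, mem_neighborSet, boxProd_adj, Set.mem_union, Set.mem_image,
      Set.mem_setOf_eq, Prod.mk.injEq]
    constructor
    · rintro ⟨⟨h1, h2⟩ | ⟨h1, h2⟩, hS⟩
      · subst h2; exact Or.inl ⟨a, ⟨h1, hS⟩, rfl, rfl⟩
      · subst h2; exact Or.inr ⟨b, ⟨h1, hS⟩, rfl, rfl⟩
    · rintro (⟨z, ⟨h1, h2⟩, rfl, rfl⟩ | ⟨z, ⟨h1, h2⟩, rfl, rfl⟩)
      · exact ⟨Or.inl ⟨h1, rfl⟩, h2⟩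
      · exact ⟨Or.inr ⟨h1, rfl⟩, h2⟩
  have hdisj : Disjoint ((fun z => (z, y)) '' (G.neighborSet x ∩ {z | (z, y) ∈ S}))
      ((fun z => (x, z)) '' (H.neighborSet y ∩ {z | (x, z) ∈ S})) := by
    rw [Set.disjoint_left]
    rintro p ⟨z, ⟨hz, -⟩, rfl⟩ ⟨z', ⟨hz', -⟩, heq⟩
    injection heq with h3 h4
    exact G.irrefl (h3 ▸ hz)
  rw [nbrCount, hsplit, Set.ncard_union_eq hdisj (Set.toFinite _) (Set.toFinite _),
    Set.ncard_image_of_injective _ (fun a b h => by simpa using congrArg Prod.fst h),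
    Set.ncard_image_of_injective _ (fun a b h => by simpa using congrArg Prod.snd h)]
  rfl

end BoxAux

section CountLemmas
variable {V : Type*} {G : SimpleGraph V} {C : Set V} {ρ : ℕ} {γ a b : ℕ → ℕ}

lemma mem_cell_le_covRad [Finite V] {i : ℕ} {x : V} (hx : x ∈ codeCell G C i) :
    i ≤ covRad G C := by
  simp only [codeCell, Set.mem_setOf_eq] at hx
  exact hx ▸ distToCode_le_covRad x

lemma count_down [Finite V] (hconn : G.Connected) (hC : C.Nonempty)
    (hρ : covRad G C = ρ) (hIN : HasIntNums G C ρ γ a b)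
    {i : ℕ} {x : V} (hx : x ∈ codeCell G C i) :
    nbrCount G x {z | distToCode G C z + 1 = i} = γ i := by
  have hi : i ≤ ρ := hρ ▸ mem_cell_le_covRad hx
  cases i with
  | zero =>
    have : {z | distToCode G C z + 1 = 0} = (∅ : Set V) := by
      ext z; simp
    rw [this]
    simp [nbrCount, hIN.1]
  | succ m =>
    have hset : {z | distToCode G C z + 1 = m + 1} = codeCell G C m := by
      ext z; simp only [Set.mem_setOf_eq, codeCell]; omega
    have := ((hIN.2.2 (m+1) hi x hx).1 (by omega))
    simpa [codeCell] using this

lemma count_up [Finite V] (hconn : G.Connected) (hC : C.Nonempty)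
    (hρ : covRad G C = ρ) (hIN : HasIntNums G C ρ γ a b)
    {i : ℕ} {x : V} (hx : x ∈ codeCell G C i) :
    nbrCount G x (codeCell G C (i + 1)) = b i := by
  have hi : i ≤ ρ := hρ ▸ mem_cell_le_covRad hx
  rcases Nat.lt_or_ge i ρ with h | h
  · exact (hIN.2.2 i hi x hx).2.2 h
  · have hiρ : i = ρ := by omega
    subst hiρ
    have : codeCell G C (i + 1) = (∅ : Set V) := by
      ext z
      simp only [codeCell, Set.mem_setOf_eq, Set.mem_empty_iff_false, iff_false]
      have := hρ ▸ distToCode_le_covRad (G := G) (C := C) z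
      omega
    rw [this]
    simp [nbrCount, hIN.2.1]

lemma count_split [Finite V] (hconn : G.Connected) (hC : C.Nonempty)
    (hρ : covRad G C = ρ) (hIN : HasIntNums G C ρ γ a b)
    {i : ℕ} {x : V} (hx : x ∈ codeCell G C i) :
    (G.neighborSet x).ncard = γ i + nbrCount G x (codeCell G C i) + b i := by
  rw [neighborSet_ncard_split hconn hC hx, count_down hconn hC hρ hIN hx,
    count_up hconn hC hρ hIN hx]

end CountLemmas

section ProdLemmas
variable {α β : Type*} [Finite α] [Finite β] {G : SimpleGraph α} {H : SimpleGraph β}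
  {C : Set α} {C' : Set β} {ρ ρ' : ℕ} {γ a b γ' a' b' : ℕ → ℕ}

lemma mem_cell_boxProd (hG : G.Connected) (hH : H.Connected)
    (hC : C.Nonempty) (hC' : C'.Nonempty) {x : α} {y : β} {i j : ℕ}
    (hx : x ∈ codeCell G C i) (hy : y ∈ codeCell H C' j) :
    (x, y) ∈ codeCell (G □ H) (C ×ˢ C') (i + j) := by
  simp only [codeCell, Set.mem_setOf_eq] at hx hy ⊢
  rw [distToCode_boxProd hG hH hC hC', hx, hy]

lemma prod_count_down (hG : G.Connected) (hH : H.Connected)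
    (hC : C.Nonempty) (hC' : C'.Nonempty)
    (hρ : covRad G C = ρ) (hρ' : covRad H C' = ρ')
    (hIN : HasIntNums G C ρ γ a b) (hIN' : HasIntNums H C' ρ' γ' a' b')
    {x : α} {y : β} {i j : ℕ} (hx : x ∈ codeCell G C i) (hy : y ∈ codeCell H C' j)
    {k : ℕ} (hk : i + j = k) :
    nbrCount (G □ H) (x, y) {p | distToCode (G □ H) (C ×ˢ C') p + 1 = k}
      = γ i + γ' j := by
  simp only [codeCell, Set.mem_setOf_eq] at hx hy
  rw [nbrCount_boxProd]
  have h1 : {z | ((z, y) : α × β) ∈ {p | distToCode (G □ H) (C ×ˢ C') p + 1 = k}}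
      = {z | distToCode G C z + 1 = i} := by
    ext z
    simp only [Set.mem_setOf_eq, distToCode_boxProd hG hH hC hC', hy]
    omega
  have h2 : {z | ((x, z) : α × β) ∈ {p | distToCode (G □ H) (C ×ˢ C') p + 1 = k}}
      = {z | distToCode H C' z + 1 = j} := by
    ext z
    simp only [Set.mem_setOf_eq, distToCode_boxProd hG hH hC hC', hx]
    omega
  rw [h1, h2, count_down hG hC hρ hIN hx, count_down hH hC' hρ' hIN' hy]

lemma prod_count_up (hG : G.Connected) (hH : H.Connected)
    (hC : C.Nonempty) (hC' : C'.Nonempty)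
    (hρ : covRad G C = ρ) (hρ' : covRad H C' = ρ')
    (hIN : HasIntNums G C ρ γ a b) (hIN' : HasIntNums H C' ρ' γ' a' b')
    {x : α} {y : β} {i j : ℕ} (hx : x ∈ codeCell G C i) (hy : y ∈ codeCell H C' j)
    {k : ℕ} (hk : i + j = k) :
    nbrCount (G □ H) (x, y) (codeCell (G □ H) (C ×ˢ C') (k + 1)) = b i + b' j := by
  have hxm := hx; have hym := hy
  simp only [codeCell, Set.mem_setOf_eq] at hxm hym
  rw [nbrCount_boxProd]
  have h1 : {z | ((z, y) : α × β) ∈ codeCell (G □ H) (C ×ˢ C') (k + 1)}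
      = codeCell G C (i + 1) := by
    ext z
    simp only [Set.mem_setOf_eq, codeCell, distToCode_boxProd hG hH hC hC', hym]
    omega
  have h2 : {z | ((x, z) : α × β) ∈ codeCell (G □ H) (C ×ˢ C') (k + 1)}
      = codeCell H C' (j + 1) := by
    ext z
    simp only [Set.mem_setOf_eq, codeCell, distToCode_boxProd hG hH hC hC', hxm]
    omega
  rw [h1, h2, count_up hG hC hρ hIN hx, count_up hH hC' hρ' hIN' hy]

lemma boxProd_nbr_ncard (x : α) (y : β) :
    ((G □ H).neighborSet (x, y)).ncard
      = (G.neighborSet x).ncard + (H.neighborSet y).ncard := by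
  have := nbrCount_boxProd (G := G) (H := H) x y Set.univ
  simpa [nbrCount] using this

end ProdLemmas

section MainAbstract
variable {α β : Type*} [Finite α] [Finite β] {G : SimpleGraph α} {H : SimpleGraph β}
  {C : Set α} {C' : Set β} {ρ ρ' : ℕ} {γ a b γ' a' b' : ℕ → ℕ}

theorem main_abstract (hG : G.Connected) (hH : H.Connected)
    (hreg : ∀ u v : α, (G.neighborSet u).ncard = (G.neighborSet v).ncard)
    (hreg' : ∀ u v : β, (H.neighborSet u).ncard = (H.neighborSet v).ncard)
    (hCne : C.Nonempty) (hC'ne : C'.Nonempty)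
    (hρ1 : 1 ≤ ρ) (hρ'1 : 1 ≤ ρ')
    (hρ : covRad G C = ρ) (hρ' : covRad H C' = ρ')
    (hIN : HasIntNums G C ρ γ a b) (hIN' : HasIntNums H C' ρ' γ' a' b') :
    (IsCompRegCode (G □ H) (C ×ˢ C') ↔
      ∃ n1 n2 : ℕ, (∀ i ≤ ρ, γ i = n1 * i) ∧ (∀ i ≤ ρ', γ' i = n1 * i) ∧
        (∀ i ≤ ρ, b (ρ - i) = n2 * i) ∧ (∀ i ≤ ρ', b' (ρ' - i) = n2 * i)) ∧
    (∀ n1 n2 : ℕ, ((∀ i ≤ ρ, γ i = n1 * i) ∧ (∀ i ≤ ρ', γ' i = n1 * i) ∧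
        (∀ i ≤ ρ, b (ρ - i) = n2 * i) ∧ (∀ i ≤ ρ', b' (ρ' - i) = n2 * i)) →
      covRad (G □ H) (C ×ˢ C') = ρ + ρ' ∧
      ∃ ᾱ : ℕ → ℕ, HasIntNums (G □ H) (C ×ˢ C') (ρ + ρ')
        (fun i => n1 * i) ᾱ (fun i => n2 * (ρ + ρ' - i))) := by
  have hKconn : (G □ H).Connected := hG.boxProd hH
  have hDne : (C ×ˢ C').Nonempty := hCne.prod hC'ne
  have cellG : ∀ i ≤ ρ, (codeCell G C i).Nonempty :=
    fun i hi => cell_nonempty hG hCne (hρ ▸ hi)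
  have cellH : ∀ j ≤ ρ', (codeCell H C' j).Nonempty :=
    fun j hj => cell_nonempty hH hC'ne (hρ' ▸ hj)
  -- decompose membership in a product cell
  have memk : ∀ (x : α) (y : β) (k : ℕ), (x, y) ∈ codeCell (G □ H) (C ×ˢ C') k →
      ∃ i j, x ∈ codeCell G C i ∧ y ∈ codeCell H C' j ∧ i + j = k ∧ i ≤ ρ ∧ j ≤ ρ' := by
    intro x y k hp
    simp only [codeCell, Set.mem_setOf_eq, distToCode_boxProd hG hH hCne hC'ne] at hp
    exact ⟨distToCode G C x, distToCode H C' y, rfl, rfl, hp,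
      hρ ▸ distToCode_le_covRad x, hρ' ▸ distToCode_le_covRad y⟩
  -- counting under the linearity hypothesis
  have bwd : ∀ n1 n2 : ℕ, ((∀ i ≤ ρ, γ i = n1 * i) ∧ (∀ i ≤ ρ', γ' i = n1 * i) ∧
      (∀ i ≤ ρ, b (ρ - i) = n2 * i) ∧ (∀ i ≤ ρ', b' (ρ' - i) = n2 * i)) →
      ∀ (x : α) (y : β) (k : ℕ), (x, y) ∈ codeCell (G □ H) (C ×ˢ C') k →
        nbrCount (G □ H) (x, y) {p | distToCode (G □ H) (C ×ˢ C') p + 1 = k} = n1 * k ∧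
        nbrCount (G □ H) (x, y) (codeCell (G □ H) (C ×ˢ C') (k + 1))
          = n2 * (ρ + ρ' - k) := by
    rintro n1 n2 ⟨hg, hg', hb, hb'⟩ x y k hp
    obtain ⟨i, j, hx, hy, hij, hiρ, hjρ⟩ := memk x y k hp
    constructor
    · rw [prod_count_down hG hH hCne hC'ne hρ hρ' hIN hIN' hx hy hij,
        hg i hiρ, hg' j hjρ, ← Nat.mul_add, hij]
    · rw [prod_count_up hG hH hCne hC'ne hρ hρ' hIN hIN' hx hy hij]
      have h1 : b i = n2 * (ρ - i) := by
        have := hb (ρ - i) (Nat.sub_le _ _)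
        rwa [Nat.sub_sub_self hiρ] at this
      have h2 : b' j = n2 * (ρ' - j) := by
        have := hb' (ρ' - j) (Nat.sub_le _ _)
        rwa [Nat.sub_sub_self hjρ] at this
      rw [h1, h2, ← Nat.mul_add]
      congr 1
      omega
  constructor
  · constructor
    · -- forward direction
      intro hcr
      have keyγ : ∀ i ≤ ρ, ∀ j ≤ ρ', ∀ i' ≤ ρ, ∀ j' ≤ ρ', i + j = i' + j' →
          γ i + γ' j = γ i' + γ' j' := by
        intro i hi j hj i' hi' j' hj' hsum
        obtain ⟨x, hx⟩ := cellG i hi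
        obtain ⟨y, hy⟩ := cellH j hj
        obtain ⟨x', hx'⟩ := cellG i' hi'
        obtain ⟨y', hy'⟩ := cellH j' hj'
        rcases Nat.eq_zero_or_pos (i + j) with hk0 | hk1
        · obtain ⟨rfl, rfl⟩ : i = 0 ∧ j = 0 := by omega
          obtain ⟨rfl, rfl⟩ : i' = 0 ∧ j' = 0 := by omega
          rfl
        · have hcell : codeCell (G □ H) (C ×ˢ C') (i + j - 1)
              = {p | distToCode (G □ H) (C ×ˢ C') p + 1 = i + j} := by
            ext p
            simp only [codeCell, Set.mem_setOf_eq]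
            omega
          have h := hcr (i + j) (i + j - 1) (x, y)
            (mem_cell_boxProd hG hH hCne hC'ne hx hy) (x', y')
            (by have := mem_cell_boxProd hG hH hCne hC'ne hx' hy'; rwa [← hsum] at this)
          rw [hcell, prod_count_down hG hH hCne hC'ne hρ hρ' hIN hIN' hx hy rfl,
            prod_count_down hG hH hCne hC'ne hρ hρ' hIN hIN' hx' hy' hsum.symm] at h
          exact h
      have keyβ : ∀ i ≤ ρ, ∀ j ≤ ρ', ∀ i' ≤ ρ, ∀ j' ≤ ρ', i + j = i' + j' →
          b i + b' j = b i' + b' j' := by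
        intro i hi j hj i' hi' j' hj' hsum
        obtain ⟨x, hx⟩ := cellG i hi
        obtain ⟨y, hy⟩ := cellH j hj
        obtain ⟨x', hx'⟩ := cellG i' hi'
        obtain ⟨y', hy'⟩ := cellH j' hj'
        have h := hcr (i + j) (i + j + 1) (x, y)
          (mem_cell_boxProd hG hH hCne hC'ne hx hy) (x', y')
          (by have := mem_cell_boxProd hG hH hCne hC'ne hx' hy'; rwa [← hsum] at this)
        rw [prod_count_up hG hH hCne hC'ne hρ hρ' hIN hIN' hx hy rfl] at h
        rw [show i + j + 1 = i' + j' + 1 by omega,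
          prod_count_up hG hH hCne hC'ne hρ hρ' hIN hIN' hx' hy' rfl] at h
        exact h
      have hγ'1 : γ' 1 = γ 1 := by
        have := keyγ 1 hρ1 0 (Nat.zero_le _) 0 (Nat.zero_le _) 1 hρ'1 (by omega)
        rw [hIN.1, hIN'.1] at this
        omega
      have hn2 : b (ρ - 1) = b' (ρ' - 1) := by
        have := keyβ (ρ - 1) (by omega) ρ' le_rfl ρ le_rfl (ρ' - 1) (by omega) (by omega)
        rw [hIN.2.1, hIN'.2.1] at this
        omega
      refine ⟨γ 1, b' (ρ' - 1), ?_, ?_, ?_, ?_⟩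
      · intro i hi
        induction i with
        | zero => simpa using hIN.1
        | succ m ih =>
          have h1 := keyγ (m + 1) hi 0 (Nat.zero_le _) m (by omega) 1 hρ'1 (by omega)
          rw [hIN'.1, hγ'1] at h1
          have h2 := ih (by omega)
          rw [Nat.mul_succ]
          omega
      · intro j hj
        induction j with
        | zero => simpa using hIN'.1
        | succ m ih =>
          have h1 := keyγ 0 (Nat.zero_le _) (m + 1) hj 1 hρ1 m (by omega) (by omega)
          rw [hIN.1] at h1
          have h2 := ih (by omega)
          rw [Nat.mul_succ]
          omega
      · intro i hi
        induction i with
        | zero => simpa using hIN.2.1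
        | succ m ih =>
          have h1 := keyβ (ρ - (m + 1)) (by omega) ρ' le_rfl (ρ - m) (by omega)
            (ρ' - 1) (by omega) (by omega)
          rw [hIN'.2.1] at h1
          have h2 := ih (by omega)
          rw [Nat.mul_succ]
          omega
      · intro j hj
        induction j with
        | zero => simpa using hIN'.2.1
        | succ m ih =>
          have h1 := keyβ ρ le_rfl (ρ' - (m + 1)) (by omega) (ρ - 1) (by omega)
            (ρ' - m) (by omega) (by omega)
          rw [hIN.2.1, hn2] at h1
          have h2 := ih (by omega)
          rw [Nat.mul_succ]
          omega
    · -- backward direction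
      rintro ⟨n1, n2, hlin⟩
      intro k m p hp p' hp'
      obtain ⟨x, y⟩ := p
      obtain ⟨x', y'⟩ := p'
      by_cases hm1 : m + 1 = k
      · have hcell : codeCell (G □ H) (C ×ˢ C') m
            = {p | distToCode (G □ H) (C ×ˢ C') p + 1 = k} := by
          ext p; simp only [codeCell, Set.mem_setOf_eq]; omega
        rw [hcell, (bwd n1 n2 hlin x y k hp).1, (bwd n1 n2 hlin x' y' k hp').1]
      · by_cases hm2 : m = k + 1
        · subst hm2
          rw [(bwd n1 n2 hlin x y k hp).2, (bwd n1 n2 hlin x' y' k hp').2]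
        · by_cases hm3 : m = k
          · subst hm3
            have hs := neighborSet_ncard_split hKconn hDne hp
            have hs' := neighborSet_ncard_split hKconn hDne hp'
            have hN : ((G □ H).neighborSet (x, y)).ncard
                = ((G □ H).neighborSet (x', y')).ncard := by
              rw [boxProd_nbr_ncard, boxProd_nbr_ncard, hreg x x', hreg' y y']
            rw [(bwd n1 n2 hlin x y m hp).1, (bwd n1 n2 hlin x y m hp).2] at hs
            rw [(bwd n1 n2 hlin x' y' m hp').1, (bwd n1 n2 hlin x' y' m hp').2] at hs'
            omega
          · rw [nbrCount_cell_eq_zero hKconn hDne hp (by omega) hm3 hm2,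
              nbrCount_cell_eq_zero hKconn hDne hp' (by omega) hm3 hm2]
  · -- second bullet
    rintro n1 n2 hlin
    have hcov : covRad (G □ H) (C ×ˢ C') = ρ + ρ' := by
      refine covRad_eq_of (fun p => ?_) ?_
      · obtain ⟨x, y⟩ := p
        rw [distToCode_boxProd hG hH hCne hC'ne]
        have h1 := hρ ▸ distToCode_le_covRad (G := G) (C := C) x
        have h2 := hρ' ▸ distToCode_le_covRad (G := H) (C := C') y
        omega
      · obtain ⟨x, hx⟩ := cellG ρ le_rfl
        obtain ⟨y, hy⟩ := cellH ρ' le_rfl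
        exact ⟨(x, y), mem_cell_boxProd hG hH hCne hC'ne hx hy⟩
    refine ⟨hcov, ?_⟩
    have : Nonempty α := hG.nonempty
    have : Nonempty β := hH.nonempty
    set DG := (G.neighborSet (Classical.arbitrary α)).ncard with hDG
    set DH := (H.neighborSet (Classical.arbitrary β)).ncard with hDH
    refine ⟨fun k => DG + DH - (n1 * k + n2 * (ρ + ρ' - k)), by simp, by simp, ?_⟩
    intro k hk p hp
    obtain ⟨x, y⟩ := p
    have hdown := (bwd n1 n2 hlin x y k hp).1
    have hup := (bwd n1 n2 hlin x y k hp).2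
    refine ⟨?_, ?_, fun _ => hup⟩
    · intro h1k
      have hcell : codeCell (G □ H) (C ×ˢ C') (k - 1)
          = {p | distToCode (G □ H) (C ×ˢ C') p + 1 = k} := by
        ext p; simp only [codeCell, Set.mem_setOf_eq]; omega
      rw [hcell]; exact hdown
    · have hs := neighborSet_ncard_split hKconn hDne hp
      have hN : ((G □ H).neighborSet (x, y)).ncard = DG + DH := by
        rw [boxProd_nbr_ncard, hreg x (Classical.arbitrary α),
          hreg' y (Classical.arbitrary β)]
      rw [hdown, hup, hN] at hs
      show nbrCount (G □ H) (x, y) (codeCell (G □ H) (C ×ˢ C') k)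
        = DG + DH - (n1 * k + n2 * (ρ + ρ' - k))
      omega

end MainAbstract

/-- characterization of when the product of two completely regular codes
is completely regular, with the resulting covering radius and intersection numbers. -/
theorem product_compRegular_iff {n q n' q' : ℕ}
    (C : Set (Fin n → Fin q)) (C' : Set (Fin n' → Fin q'))
    (hCnt : C.Nontrivial ∧ C ≠ Set.univ)
    (hC'nt : C'.Nontrivial ∧ C' ≠ Set.univ)
    (ρ ρ' : ℕ) (hρ1 : 1 ≤ ρ) (hρρ' : ρ ≤ ρ')
    (γ α β γ' α' β' : ℕ → ℕ)
    (hC : IsCompRegCode (hammingGraph n (Fin q)) C)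
    (hC' : IsCompRegCode (hammingGraph n' (Fin q')) C')
    (hρ : covRad (hammingGraph n (Fin q)) C = ρ)
    (hρ' : covRad (hammingGraph n' (Fin q')) C' = ρ')
    (hIN : HasIntNums (hammingGraph n (Fin q)) C ρ γ α β)
    (hIN' : HasIntNums (hammingGraph n' (Fin q')) C' ρ' γ' α' β') :
    (IsCompRegCode (hammingGraph n (Fin q) □ hammingGraph n' (Fin q')) (C ×ˢ C') ↔
      ∃ n1 n2 : ℕ, (∀ i ≤ ρ, γ i = n1 * i) ∧ (∀ i ≤ ρ', γ' i = n1 * i) ∧ (∀ i ≤ ρ, β (ρ - i) = n2 * i) ∧ (∀ i ≤ ρ', β' (ρ' - i) = n2 * i)) ∧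
    (∀ n1 n2 : ℕ, (∀ i ≤ ρ, γ i = n1 * i) ∧ (∀ i ≤ ρ', γ' i = n1 * i) ∧ (∀ i ≤ ρ, β (ρ - i) = n2 * i) ∧ (∀ i ≤ ρ', β' (ρ' - i) = n2 * i) →
      covRad (hammingGraph n (Fin q) □ hammingGraph n' (Fin q')) (C ×ˢ C') = ρ + ρ' ∧
      ∃ ᾱ : ℕ → ℕ, HasIntNums (hammingGraph n (Fin q) □ hammingGraph n' (Fin q')) (C ×ˢ C') (ρ + ρ')
        (fun i => n1 * i) ᾱ (fun i => n2 * (ρ + ρ' - i))) := by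
  obtain ⟨x₀, hx₀, y₀, hy₀, hxy₀⟩ := hCnt.1
  obtain ⟨x₀', hx₀', y₀', hy₀', hxy₀'⟩ := hC'nt.1
  have hCne : C.Nonempty := ⟨x₀, hx₀⟩
  have hC'ne : C'.Nonempty := ⟨x₀', hx₀'⟩
  have hne : Nonempty (Fin n → Fin q) := ⟨x₀⟩
  have hne' : Nonempty (Fin n' → Fin q') := ⟨x₀'⟩
  have hq : q ≠ 0 := by
    rcases Nat.eq_zero_or_pos n with rfl | hn
    · exact absurd (funext fun i => i.elim0) hxy₀
    · have := (x₀ ⟨0, hn⟩).isLt; omega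
  have hq2 : q' ≠ 0 := by
    rcases Nat.eq_zero_or_pos n' with rfl | hn
    · exact absurd (funext fun i => i.elim0) hxy₀'
    · have := (x₀' ⟨0, hn⟩).isLt; omega
  exact main_abstract (hammingGraph_connected n q) (hammingGraph_connected n' q')
    (hammingGraph_regular n q hq) (hammingGraph_regular n' q' hq2)
    hCne hC'ne hρ1 (le_trans hρ1 hρρ') hρ hρ' hIN hIN'
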